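/- Let R be a ring and let e(x) = e_0 + e_1 x + ... + e_m x^m be an idempotent in the polynomial ring R[x]. Then every coefficient e_i lies in the two-sided ideal R e_0 R generated by the constant term e_0. -/

import Mathlib

/-- If `e(x) = e₀ + e₁x + ⋯ + eₘxᵐ` is an idempotent of the polynomial ring `R[x]`,
then every coefficient `eᵢ` lies in the two-sided ideal `R e₀ R` generated by `e₀`. -/
theorem coeff_mem_span_constantCoeff_of_idempotent_polynomial
    {R : Type*} [Ring R] (e : Polynomial R) (he : e * e = e) :
    ∀ i : ℕ, e.coeff i ∈ TwoSidedIdeal.span {e.coeff 0} := by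
  intro i
  induction i using Nat.strong_induction_on with
  | _ i ih =>
    have h0 : e.coeff 0 ∈ TwoSidedIdeal.span {e.coeff 0} :=
      TwoSidedIdeal.subset_span rfl
    have hcoeff : e.coeff i = ∑ p ∈ Finset.HasAntidiagonal.antidiagonal i, e.coeff p.1 * e.coeff p.2 := by
      conv_lhs => rw [← he]
      exact Polynomial.coeff_mul e e i
    rw [hcoeff]
    refine TwoSidedIdeal.finsetSum_mem _ _ _ ?_
    rintro ⟨j, k⟩ hjk
    rw [Finset.HasAntidiagonal.mem_antidiagonal] at hjk
    rcases Nat.eq_zero_or_pos j with hj | hj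
    · subst hj
      exact TwoSidedIdeal.mul_mem_right _ _ _ h0
    · rcases Nat.eq_zero_or_pos k with hk | hk
      · subst hk
        exact TwoSidedIdeal.mul_mem_left _ _ _ h0
      · have : j < i := by omega
        exact TwoSidedIdeal.mul_mem_right _ _ _ (ih j this)
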